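/- For the GEE with equicorrelated-row-sum structure, the estimator using the true correlation matrix has the same asymptotic variance as the one using the identity working correlation: if R_0 is an invertible M×M correlation matrix whose rows each sum to a > 0, Γ = h·1 (a constant multiple of the all-ones vector), and A = σ²·I, then the sandwich variance (Γᵀ V^{-1} Γ)^{-1} (Γᵀ V^{-1} Σ_S V^{-1} Γ) (Γᵀ V^{-1} Γ)^{-1} with V = A^{1/2} R_w A^{1/2} and Σ_S = σ² R_0 takes the same value a·σ²/(M h²) whether R_w = R_0 or R_w = I. -/

import Mathlib

open Matrix

/-- The scalar GEE sandwich variance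
`(Γᵀ V⁻¹ Γ)⁻¹ (Γᵀ V⁻¹ Σ_S V⁻¹ Γ) (Γᵀ V⁻¹ Γ)⁻¹` with `V = A^{1/2} R_w A^{1/2}`,
`A = σ² I` (so `V = σ² R_w`), `Γ = h·1` and `Σ_S = σ² R₀`. -/
noncomputable def sandwichVar (M : ℕ) (h σsq : ℝ)
    (Rw SigS : Matrix (Fin M) (Fin M) ℝ) : ℝ :=
  let Γ : Fin M → ℝ := fun _ => h
  let V := σsq • Rw
  (Γ ⬝ᵥ V⁻¹.mulVec Γ)⁻¹ * (Γ ⬝ᵥ (V⁻¹ * SigS * V⁻¹).mulVec Γ) *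
    (Γ ⬝ᵥ V⁻¹.mulVec Γ)⁻¹

lemma smul_matrix_inv {M : ℕ} (A : Matrix (Fin M) (Fin M) ℝ) (c : ℝ) (hc : c ≠ 0)
    (hinv : IsUnit A.det) : (c • A)⁻¹ = c⁻¹ • A⁻¹ := by
  apply inv_eq_right_inv
  rw [smul_mul_smul_comm, mul_nonsing_inv _ hinv, mul_inv_cancel₀ hc, one_smul]

/-- For the GEE with equal-row-sum correlation structure, the sandwich variance is
the same, namely `a σ²/(M h²)`, whether the working correlation is the true
correlation `R₀` or the identity. -/
theorem sandwich_variance_independent_working_equals_true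
    (M : ℕ) (hM : 1 ≤ M) (h : ℝ) (hh : h ≠ 0) (σsq : ℝ) (hσ : 0 < σsq)
    (R₀ : Matrix (Fin M) (Fin M) ℝ) (hsymm : R₀.IsSymm)
    (hdiag : ∀ m, R₀ m m = 1) (hinv : IsUnit R₀.det)
    (a : ℝ) (ha : 0 < a)
    (hrow : R₀.mulVec (fun _ => 1) = a • (fun _ => (1 : ℝ))) :
    sandwichVar M h σsq R₀ (σsq • R₀) = a * σsq / (M * h ^ 2) ∧
    sandwichVar M h σsq (1 : Matrix (Fin M) (Fin M) ℝ) (σsq • R₀)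
      = a * σsq / (M * h ^ 2) := by
  have hσ0 : σsq ≠ 0 := ne_of_gt hσ
  have ha0 : a ≠ 0 := ne_of_gt ha
  set one : Fin M → ℝ := fun _ => 1 with hone
  -- R₀⁻¹ applied to the all-ones vector
  have hinv1 : R₀⁻¹.mulVec one = a⁻¹ • one := by
    have h1 : R₀⁻¹.mulVec (R₀.mulVec one) = one := by
      rw [mulVec_mulVec, nonsing_inv_mul _ hinv, one_mulVec]
    rw [hrow, mulVec_smul] at h1
    have h2 := congrArg (fun v => a⁻¹ • v) h1
    simpa [smul_smul, inv_mul_cancel₀ ha0] using h2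
  have hΓ : (fun _ : Fin M => h) = h • one := by
    funext i; simp [hone]
  have honeone : one ⬝ᵥ one = (M : ℝ) := by
    simp [hone, dotProduct]
  have hMne : (M : ℝ) ≠ 0 := by positivity
  constructor
  · -- working correlation = R₀
    have hVinv : (σsq • R₀)⁻¹ = σsq⁻¹ • R₀⁻¹ := smul_matrix_inv R₀ σsq hσ0 hinv
    have hmid : (σsq⁻¹ • R₀⁻¹) * (σsq • R₀) * (σsq⁻¹ • R₀⁻¹) = σsq⁻¹ • R₀⁻¹ := by
      rw [smul_mul_smul_comm, inv_mul_cancel₀ hσ0, one_smul, nonsing_inv_mul _ hinv,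
        one_mul]
    have hdot : one ⬝ᵥ (σsq⁻¹ • R₀⁻¹).mulVec one = σsq⁻¹ * (a⁻¹ * M) := by
      rw [smul_mulVec, hinv1, dotProduct_smul, dotProduct_smul, honeone,
        smul_eq_mul, smul_eq_mul]
    simp only [sandwichVar, hVinv, hmid, hΓ, smul_dotProduct, mulVec_smul,
      dotProduct_smul, smul_eq_mul, hdot]
    field_simp
  · -- working correlation = identity
    have hVinv : (σsq • (1 : Matrix (Fin M) (Fin M) ℝ))⁻¹ = σsq⁻¹ • 1 := by
      rw [smul_matrix_inv _ σsq hσ0 (by simp), inv_one]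
    have hmid : (σsq⁻¹ • (1 : Matrix (Fin M) (Fin M) ℝ)) * (σsq • R₀) *
        (σsq⁻¹ • 1) = σsq⁻¹ • R₀ := by
      rw [smul_mul_smul_comm, inv_mul_cancel₀ hσ0, one_smul, one_mul,
        Matrix.mul_smul, mul_one]
    have hdot1 : one ⬝ᵥ ((σsq⁻¹ • (1 : Matrix (Fin M) (Fin M) ℝ)).mulVec one)
        = σsq⁻¹ * M := by
      rw [smul_mulVec, one_mulVec, dotProduct_smul, honeone, smul_eq_mul]
    have hdot2 : one ⬝ᵥ (σsq⁻¹ • R₀).mulVec one = σsq⁻¹ * (a * M) := by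
      rw [smul_mulVec, hrow, dotProduct_smul, dotProduct_smul, honeone,
        smul_eq_mul, smul_eq_mul]
    simp only [sandwichVar, hVinv, hmid, hΓ, smul_dotProduct, mulVec_smul,
      dotProduct_smul, smul_eq_mul, hdot1, hdot2]
    field_simp
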